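/- For every real γ > 1 and every real s ≥ 0: Σ_{k=1}^{∞} γ^{−k}·k^s ≤ Γ(s+1)/(log γ)^{s+1} + (s/(e·log γ))^s, where Γ is the Euler Gamma function and the convention 0^0 = 1 is used for s = 0. -/

import Mathlib

open Real MeasureTheory Set

/-- **Sum–integral comparison (series estimate in the proof of Theorem 4).**
For `γ > 1` and `s ≥ 0`, the series `∑_{k=1}^{∞} γ^{-k} k^s` converges and
`∑_{k=1}^{∞} γ^{-k} k^s ≤ Γ(s+1)/(log γ)^{s+1} + (s/(e·log γ))^s`
(with the convention `0^0 = 1`, as in `Real.rpow`, for `s = 0`).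
The sum over `k ≥ 1` is written as a sum over `k : ℕ` of the terms at `k + 1`. -/
theorem stmt7 (γ s : ℝ) (hγ : 1 < γ) (hs : 0 ≤ s) :
    Summable (fun k : ℕ => γ ^ (-((k : ℝ) + 1)) * ((k : ℝ) + 1) ^ s) ∧
    ∑' k : ℕ, γ ^ (-((k : ℝ) + 1)) * ((k : ℝ) + 1) ^ s ≤
      Real.Gamma (s + 1) / (Real.log γ) ^ (s + 1) +
        (s / (Real.exp 1 * Real.log γ)) ^ s := by
  have hb : 0 < Real.log γ := Real.log_pos hγ
  set b : ℝ := Real.log γ with hbdef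
  set f : ℝ → ℝ := fun x => Real.exp (-(b * x)) * x ^ s with hf
  set m : ℝ := s / b with hmdef
  have hm0 : 0 ≤ m := div_nonneg hs hb.le
  -- continuity of f
  have hcont : Continuous f := by
    refine Continuous.mul (Real.continuous_exp.comp (by continuity)) ?_
    exact continuous_iff_continuousAt.mpr fun x =>
      Real.continuousAt_rpow_const x s (Or.inr hs)
  have hfnn : ∀ x : ℝ, 0 ≤ x → 0 ≤ f x := fun x hx =>
    mul_nonneg (Real.exp_pos _).le (Real.rpow_nonneg hx s)
  -- monotone on [0, m]
  have hmono : MonotoneOn f (Set.Icc 0 m) := by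
    intro x hx y hy hxy
    rcases eq_or_lt_of_le hs with hs0 | hs0
    · -- s = 0 : m = 0, so x = y = 0
      have hx0 : x = 0 := le_antisymm (hx.2.trans (by simp [hmdef, ← hs0])) hx.1
      have hy0 : y = 0 := le_antisymm (hy.2.trans (by simp [hmdef, ← hs0])) hy.1
      rw [hx0, hy0]
    rcases eq_or_lt_of_le hx.1 with hx0 | hx0
    · have : f x = 0 := by
        simp [hf, ← hx0, Real.zero_rpow hs0.ne']
      rw [this]; exact hfnn y hy.1
    rcases eq_or_lt_of_le hxy with rfl | hxy
    · exact le_rfl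
    -- 0 < x < y ≤ m
    have hy0 : 0 < y := hx0.trans hxy
    have hlog : b * (y - x) ≤ s * (Real.log y - Real.log x) := by
      have h1 : Real.log x ≤ Real.log y - (y - x) / y := by
        have := Real.log_le_sub_one_of_pos (show 0 < x / y by positivity)
        rw [Real.log_div hx0.ne' hy0.ne'] at this
        have : Real.log x - Real.log y ≤ x / y - 1 := this
        have hxy' : x / y - 1 = -((y - x) / y) := by field_simp; ring
        linarith [hxy' ▸ this]
      have h2 : b * y ≤ s := by
        rw [hmdef] at hy
        have := hy.2
        calc b * y ≤ b * m := by nlinarith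
          _ = s := by rw [hmdef]; field_simp [hb.ne']
      have h3 : s * ((y - x) / y) ≥ b * (y - x) := by
        rw [ge_iff_le, mul_div_assoc']
        rw [le_div_iff₀ hy0]
        nlinarith
      nlinarith
    have hfx : f x = Real.exp (-(b * x) + s * Real.log x) := by
      rw [hf]; simp only
      rw [Real.rpow_def_of_pos hx0, Real.exp_add, mul_comm (Real.log x) s]
    have hfy : f y = Real.exp (-(b * y) + s * Real.log y) := by
      rw [hf]; simp only
      rw [Real.rpow_def_of_pos hy0, Real.exp_add, mul_comm (Real.log y) s]
    rw [hfx, hfy]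
    exact Real.exp_le_exp.2 (by linarith)
  -- antitone on [m, ∞)
  have hanti : AntitoneOn f (Set.Ici m) := by
    intro x hx y hy hxy
    rcases eq_or_lt_of_le hs with hs0 | hs0
    · -- s = 0: f t = exp(-(b t))
      have : ∀ t : ℝ, f t = Real.exp (-(b * t)) := by
        intro t; rw [hf]; simp [← hs0]
      rw [this x, this y]
      have hx0 : 0 ≤ x := le_trans (by simp [hmdef, ← hs0]) hx
      exact Real.exp_le_exp.2 (by nlinarith)
    have hmpos : 0 < m := div_pos hs0 hb
    have hx0 : 0 < x := lt_of_lt_of_le hmpos hx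
    have hy0 : 0 < y := hx0.trans_le hxy
    have hlog : s * (Real.log y - Real.log x) ≤ b * (y - x) := by
      have h1 : Real.log y - Real.log x ≤ (y - x) / x := by
        have := Real.log_le_sub_one_of_pos (show 0 < y / x by positivity)
        rw [Real.log_div hy0.ne' hx0.ne'] at this
        have hxy' : y / x - 1 = (y - x) / x := by field_simp
        linarith [hxy' ▸ this]
      have h2 : s ≤ b * x := by
        have : m ≤ x := hx
        rw [hmdef] at this
        calc s = b * m := by rw [hmdef]; field_simp [hb.ne']
          _ ≤ b * x := by nlinarith [hmdef ▸ hx]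
      calc s * (Real.log y - Real.log x) ≤ s * ((y - x) / x) := by
            apply mul_le_mul_of_nonneg_left ?_ hs
            rcases le_or_gt (Real.log y - Real.log x) ((y-x)/x) with h|h
            · exact h
            · linarith
        _ ≤ b * x * ((y - x) / x) := by
            apply mul_le_mul_of_nonneg_right h2 (div_nonneg (by linarith) hx0.le)
        _ = b * (y - x) := by field_simp
    have hfx : f x = Real.exp (-(b * x) + s * Real.log x) := by
      rw [hf]; simp only
      rw [Real.rpow_def_of_pos hx0, Real.exp_add, mul_comm (Real.log x) s]
    have hfy : f y = Real.exp (-(b * y) + s * Real.log y) := by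
      rw [hf]; simp only
      rw [Real.rpow_def_of_pos hy0, Real.exp_add, mul_comm (Real.log y) s]
    rw [hfx, hfy]
    exact Real.exp_le_exp.2 (by linarith)
  -- value at the maximum point
  have hfm : f m = (s / (Real.exp 1 * b)) ^ s := by
    rw [hf]; simp only
    have h1 : b * m = s := by rw [hmdef]; field_simp [hb.ne']
    rw [h1]
    have h2 : s / (Real.exp 1 * b) = m / Real.exp 1 := by
      rw [hmdef, div_div, mul_comm (Real.exp 1) b]
    rw [h2, Real.div_rpow hm0 (Real.exp_pos 1).le, Real.exp_one_rpow]
    rw [Real.exp_neg]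
    ring
  have hmax : ∀ x : ℝ, 0 ≤ x → f x ≤ f m := by
    intro x hx
    rcases le_total x m with h | h
    · exact hmono ⟨hx, h⟩ ⟨hm0, le_rfl⟩ h
    · exact hanti (Set.mem_Ici.mpr le_rfl) h h
  -- per-term bound: f(k+1) ≤ ∫_k^{k+1} f + (f(k+1) - f k)⁺
  have hII : ∀ k : ℕ, IntervalIntegrable f volume (k : ℝ) ((k : ℝ) + 1) :=
    fun k => hcont.intervalIntegrable _ _
  have key1 : ∀ k : ℕ, f ((k : ℝ) + 1) ≤
      (∫ x in (k : ℝ)..((k : ℝ) + 1), f x) + max (f ((k : ℝ) + 1) - f (k : ℝ)) 0 := by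
    intro k
    have knn : (0 : ℝ) ≤ (k : ℝ) := Nat.cast_nonneg k
    have hminle : min (f (k : ℝ)) (f ((k : ℝ) + 1)) ≤ ∫ x in (k : ℝ)..((k : ℝ) + 1), f x := by
      have hc : (∫ _x in (k : ℝ)..((k : ℝ) + 1), min (f (k : ℝ)) (f ((k : ℝ) + 1)))
          = min (f (k : ℝ)) (f ((k : ℝ) + 1)) := by simp
      rw [← hc]
      apply intervalIntegral.integral_mono_on (by linarith) intervalIntegrable_const (hII k)
      intro x hx
      rcases le_total x m with h | h
      · exact (min_le_left _ _).trans
          (hmono ⟨knn, hx.1.trans h⟩ ⟨knn.trans hx.1, h⟩ hx.1)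
      · exact (min_le_right _ _).trans (hanti h (h.trans hx.2) hx.2)
    rcases le_total (f (k : ℝ)) (f ((k : ℝ) + 1)) with h | h
    · rw [min_eq_left h] at hminle
      rw [max_eq_left (by linarith)]
      linarith
    · rw [min_eq_right h] at hminle
      have : (0:ℝ) ≤ max (f ((k : ℝ) + 1) - f (k : ℝ)) 0 := le_max_right _ _
      linarith
  -- positive parts telescope
  have key2 : ∀ k : ℕ, max (f ((k : ℝ) + 1) - f (k : ℝ)) 0 ≤
      f (min ((k : ℝ) + 1) m) - f (min (k : ℝ) m) := by
    intro k
    have knn : (0 : ℝ) ≤ (k : ℝ) := Nat.cast_nonneg k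
    rcases le_total ((k : ℝ) + 1) m with h | h
    · rw [min_eq_left h, min_eq_left (by linarith)]
      have hle : f (k : ℝ) ≤ f ((k : ℝ) + 1) :=
        hmono ⟨knn, by linarith⟩ ⟨by linarith, h⟩ (by linarith)
      rw [max_eq_left (by linarith)]
    · rcases le_total (k : ℝ) m with h2 | h2
      · rw [min_eq_right h, min_eq_left h2]
        apply max_le
        · have h3 : f ((k : ℝ) + 1) ≤ f m := hanti (Set.mem_Ici.mpr le_rfl) h h
          have h4 : (0:ℝ) ≤ f (k:ℝ) - f (k:ℝ) := by linarith
          have h5 : f (k : ℝ) ≤ f m := hmono ⟨knn, h2⟩ ⟨hm0, le_rfl⟩ h2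
          linarith
        · have h5 : f (k : ℝ) ≤ f m := hmono ⟨knn, h2⟩ ⟨hm0, le_rfl⟩ h2
          linarith
      · rw [min_eq_right h, min_eq_right h2]
        have hle : f ((k : ℝ) + 1) ≤ f (k : ℝ) := hanti h2 h (by linarith)
        apply max_le (by linarith) (by linarith)
  have keysum : ∀ N : ℕ, ∑ k ∈ Finset.range N, max (f ((k : ℝ) + 1) - f (k : ℝ)) 0 ≤
      (s / (Real.exp 1 * b)) ^ s := by
    intro N
    have htel : ∑ k ∈ Finset.range N,
        (f (min ((k : ℝ) + 1) m) - f (min (k : ℝ) m))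
        = f (min (N : ℝ) m) - f (min (0 : ℝ) m) := by
      have := Finset.sum_range_sub (fun k : ℕ => f (min (k : ℝ) m)) N
      simp only [Nat.cast_add, Nat.cast_one] at this
      convert this using 2 with k
      push_cast
      ring_nf
    calc ∑ k ∈ Finset.range N, max (f ((k : ℝ) + 1) - f (k : ℝ)) 0
        ≤ ∑ k ∈ Finset.range N, (f (min ((k : ℝ) + 1) m) - f (min (k : ℝ) m)) :=
          Finset.sum_le_sum fun k _ => key2 k
      _ = f (min (N : ℝ) m) - f (min (0 : ℝ) m) := htel
      _ ≤ f m - 0 := by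
          have h1 : f (min (N : ℝ) m) ≤ f m :=
            hmax _ (le_min (Nat.cast_nonneg N) hm0)
          have h2 : 0 ≤ f (min (0 : ℝ) m) := hfnn _ (by simp [hm0])
          linarith
      _ = (s / (Real.exp 1 * b)) ^ s := by rw [sub_zero, hfm]
  -- the integral over Ioi 0
  have hIOn : IntegrableOn f (Ioi 0) := by
    have h := integrableOn_rpow_mul_exp_neg_mul_rpow (p := 1) (s := s) (b := b)
      (by linarith) zero_lt_one hb
    apply h.congr_fun ?_ measurableSet_Ioi
    intro x hx
    simp only [Real.rpow_one, hf]
    ring_nf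
  have hIval : ∫ x in Ioi (0:ℝ), f x = Real.Gamma (s + 1) / b ^ (s + 1) := by
    have h := Real.integral_rpow_mul_exp_neg_mul_Ioi (a := s + 1) (r := b)
      (by linarith) hb
    have heq : ∫ x in Ioi (0:ℝ), f x
        = ∫ t in Ioi (0:ℝ), t ^ (s + 1 - 1) * Real.exp (-(b * t)) := by
      apply setIntegral_congr_fun measurableSet_Ioi
      intro x _
      simp only [hf, add_sub_cancel_right]
      ring
    rw [heq, h, Real.div_rpow (by norm_num) hb.le, Real.one_rpow]
    field_simp
  have hIbound : ∀ N : ℕ, ∫ x in (0:ℝ)..(N:ℝ), f x ≤ Real.Gamma (s + 1) / b ^ (s + 1) := by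
    intro N
    rw [intervalIntegral.integral_of_le (Nat.cast_nonneg N), ← hIval]
    apply setIntegral_mono_set hIOn
    · filter_upwards [self_mem_ae_restrict (measurableSet_Ioi : MeasurableSet (Ioi (0:ℝ)))]
        with x hx
      exact hfnn x hx.le
    · exact HasSubset.Subset.eventuallyLE Ioc_subset_Ioi_self
  have hsumint : ∀ N : ℕ, ∑ k ∈ Finset.range N, ∫ x in (k : ℝ)..((k : ℝ) + 1), f x
      = ∫ x in (0:ℝ)..(N:ℝ), f x := by
    intro N
    have h := intervalIntegral.sum_integral_adjacent_intervals
      (f := f) (μ := volume) (a := fun k : ℕ => (k : ℝ)) (n := N)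
      (fun k _ => hcont.intervalIntegrable _ _)
    simp only [Nat.cast_zero, Nat.cast_add, Nat.cast_one] at h
    exact h
  -- terms of the series equal f(k+1)
  have hterm : ∀ k : ℕ, γ ^ (-((k : ℝ) + 1)) * ((k : ℝ) + 1) ^ s = f ((k : ℝ) + 1) := by
    intro k
    rw [hf]
    simp only
    congr 1
    rw [Real.rpow_def_of_pos (by linarith : (0:ℝ) < γ)]
    rw [← hbdef]; ring_nf
  -- uniform partial-sum bound
  have hbound : ∀ N : ℕ, ∑ k ∈ Finset.range N, γ ^ (-((k : ℝ) + 1)) * ((k : ℝ) + 1) ^ s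
      ≤ Real.Gamma (s + 1) / b ^ (s + 1) + (s / (Real.exp 1 * b)) ^ s := by
    intro N
    calc ∑ k ∈ Finset.range N, γ ^ (-((k : ℝ) + 1)) * ((k : ℝ) + 1) ^ s
        = ∑ k ∈ Finset.range N, f ((k : ℝ) + 1) :=
          Finset.sum_congr rfl fun k _ => hterm k
      _ ≤ ∑ k ∈ Finset.range N,
            ((∫ x in (k : ℝ)..((k : ℝ) + 1), f x) + max (f ((k : ℝ) + 1) - f (k : ℝ)) 0) :=
          Finset.sum_le_sum fun k _ => key1 k
      _ = (∑ k ∈ Finset.range N, ∫ x in (k : ℝ)..((k : ℝ) + 1), f x)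
            + ∑ k ∈ Finset.range N, max (f ((k : ℝ) + 1) - f (k : ℝ)) 0 :=
          Finset.sum_add_distrib
      _ ≤ Real.Gamma (s + 1) / b ^ (s + 1) + (s / (Real.exp 1 * b)) ^ s := by
          refine add_le_add ?_ (keysum N)
          rw [hsumint N]
          exact hIbound N
  have hnn : ∀ k : ℕ, 0 ≤ γ ^ (-((k : ℝ) + 1)) * ((k : ℝ) + 1) ^ s := fun k =>
    mul_nonneg (Real.rpow_nonneg (by linarith) _) (Real.rpow_nonneg (by positivity) _)
  exact ⟨summable_of_sum_range_le hnn hbound,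
    Real.tsum_le_of_sum_range_le hnn hbound⟩
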